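/- arXiv:0906.4509 — 2 statements merged into one kernel-verified Lean document; each statement's English description precedes it below -/
import Mathlib

section
/- Let φ ∈ ΓL(V)_H and let φ' be the permutation of [V] defined by φ'(⟨x⟩) = σφσ(⟨x⟩) if ⟨x⟩ ∈ [H] and φ'(⟨x⟩) = φ(⟨x⟩) otherwise. Then for every (e+1)-dimensional subspace W of H, φ'([W]) = [σφσ(W)]; in particular φ' maps blocks in ℬ' to blocks in ℬ'. -/
/-- The set of projective points (1-dimensional subspaces) contained in a subset `S` of `V`. -/
def projPts (K : Type*) {V : Type*} [Field K] [AddCommGroup V] [Module K V]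
    (S : Set V) : Set (Submodule K V) :=
  {P | Module.finrank K P = 1 ∧ (P : Set V) ⊆ S}

/-- `𝒜`: the (e+1)-dimensional subspaces of `V` not contained in `H`. -/
def setA {K V : Type*} [Field K] [AddCommGroup V] [Module K V]
    (e : ℕ) (H : Submodule K V) : Set (Submodule K V) :=
  {W | Module.finrank K W = e + 1 ∧ ¬ W ≤ H}

/-- `ℬ`: the (e-1)-dimensional subspaces of `H`. -/
def setB {K V : Type*} [Field K] [AddCommGroup V] [Module K V]
    (e : ℕ) (H : Submodule K V) : Set (Submodule K V) :=
  {W | Module.finrank K W = e - 1 ∧ W ≤ H}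

/-- The block `[σ(W ∩ H) ∪ (W \ H)]` associated to `W ∈ 𝒜`. -/
def blockA {K V : Type*} [Field K] [AddCommGroup V] [Module K V]
    (σ : Submodule K V → Submodule K V) (H W : Submodule K V) : Set (Submodule K V) :=
  projPts K ((σ (W ⊓ H) : Set V) ∪ ((W : Set V) \ (H : Set V)))

/-- The block `[σ(W)]` associated to `W ∈ ℬ`. -/
def blockB {K V : Type*} [Field K] [AddCommGroup V] [Module K V]
    (σ : Submodule K V → Submodule K V) (W : Submodule K V) : Set (Submodule K V) :=
  projPts K (σ W : Set V)

/-- The block set `𝒜' ∪ ℬ'` of the Jungnickel–Tonchev design. -/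
def blocksJT {K V : Type*} [Field K] [AddCommGroup V] [Module K V]
    (e : ℕ) (σ : Submodule K V → Submodule K V) (H : Submodule K V) :
    Set (Set (Submodule K V)) :=
  (blockA σ H '' setA e H) ∪
    {B | ∃ W : Submodule K V, Module.finrank K W = e + 1 ∧ W ≤ H ∧ B = projPts K (W : Set V)}

/-- The image of a subspace `W` of `V` under a semilinear bijection `φ` of `V`
(an element of the general semilinear group `ΓL(V)`). -/
def semimap {K V : Type*} [Field K] [AddCommGroup V] [Module K V]
    (τ : K ≃+* K) (φ : V ≃+ V)
    (hφ : ∀ (c : K) (x : V), φ (c • x) = τ c • φ x) (W : Submodule K V) :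
    Submodule K V where
  carrier := φ '' (W : Set V)
  add_mem' := by
    rintro _ _ ⟨a, ha, rfl⟩ ⟨b, hb, rfl⟩
    exact ⟨a + b, W.add_mem ha hb, map_add φ a b⟩
  zero_mem' := ⟨0, W.zero_mem, map_zero φ⟩
  smul_mem' := by
    rintro c _ ⟨a, ha, rfl⟩
    exact ⟨τ.symm c • a, W.smul_mem _ ha, by rw [hφ, RingEquiv.apply_symm_apply]⟩

open Classical in
/-- The permutation `φ'` of the projective points of `V` induced by `φ ∈ ΓL(V)_H`:
on points of `H` it acts as `σ φ σ`, elsewhere as `φ`. -/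
noncomputable def phiMap {K V : Type*} [Field K] [AddCommGroup V] [Module K V]
    (σ : Submodule K V → Submodule K V) (H : Submodule K V)
    (τ : K ≃+* K) (φ : V ≃+ V)
    (hφ : ∀ (c : K) (x : V), φ (c • x) = τ c • φ x) (P : Submodule K V) : Submodule K V :=
  if P ≤ H then σ (semimap τ φ hφ (σ P)) else semimap τ φ hφ P

section Aux
variable {K V : Type*} [Field K] [AddCommGroup V] [Module K V]

lemma hphisymm (τ : K ≃+* K) (φ : V ≃+ V)
    (hφ : ∀ (c : K) (x : V), φ (c • x) = τ c • φ x) :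
    ∀ (c : K) (x : V), φ.symm (c • x) = τ.symm c • φ.symm x := by
  intro c x
  apply φ.injective
  rw [hφ, RingEquiv.apply_symm_apply, AddEquiv.apply_symm_apply, AddEquiv.apply_symm_apply]

lemma semimap_coe (τ : K ≃+* K) (φ : V ≃+ V)
    (hφ : ∀ (c : K) (x : V), φ (c • x) = τ c • φ x) (W : Submodule K V) :
    (semimap τ φ hφ W : Set V) = φ '' (W : Set V) := rfl

lemma semimap_mono (τ : K ≃+* K) (φ : V ≃+ V)
    (hφ : ∀ (c : K) (x : V), φ (c • x) = τ c • φ x) {W₁ W₂ : Submodule K V}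
    (h : W₁ ≤ W₂) : semimap τ φ hφ W₁ ≤ semimap τ φ hφ W₂ := by
  rw [← SetLike.coe_subset_coe, semimap_coe, semimap_coe]
  exact Set.image_mono h

lemma semimap_symm_semimap (τ : K ≃+* K) (φ : V ≃+ V)
    (hφ : ∀ (c : K) (x : V), φ (c • x) = τ c • φ x) (W : Submodule K V) :
    semimap τ.symm φ.symm (hphisymm τ φ hφ) (semimap τ φ hφ W) = W := by
  apply SetLike.coe_injective
  rw [semimap_coe, semimap_coe, Set.image_image]
  simp

lemma semimap_semimap_symm (τ : K ≃+* K) (φ : V ≃+ V)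
    (hφ : ∀ (c : K) (x : V), φ (c • x) = τ c • φ x) (W : Submodule K V) :
    semimap τ φ hφ (semimap τ.symm φ.symm (hphisymm τ φ hφ) W) = W := by
  apply SetLike.coe_injective
  rw [semimap_coe, semimap_coe, Set.image_image]
  simp

lemma finrank_semimap [Fintype K] [FiniteDimensional K V] (τ : K ≃+* K) (φ : V ≃+ V)
    (hφ : ∀ (c : K) (x : V), φ (c • x) = τ c • φ x) (W : Submodule K V) :
    Module.finrank K (semimap τ φ hφ W) = Module.finrank K W := by
  classical
  haveI : Finite V := Module.finite_of_finite K
  have hcard : Nat.card (semimap τ φ hφ W) = Nat.card W := by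
    show Nat.card ↥((semimap τ φ hφ W : Set V)) = Nat.card ↥((W : Set V))
    rw [Nat.card_coe_set_eq, Nat.card_coe_set_eq, semimap_coe,
      Set.ncard_image_of_injective _ φ.injective]
  letI : Fintype W := Fintype.ofFinite _
  letI : Fintype (semimap τ φ hφ W) := Fintype.ofFinite _
  rw [Nat.card_eq_fintype_card, Nat.card_eq_fintype_card,
    Module.card_eq_pow_finrank (K := K) (V := ↥W),
    Module.card_eq_pow_finrank (K := K) (V := ↥(semimap τ φ hφ W))] at hcard
  exact Nat.pow_right_injective Fintype.one_lt_card hcard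

end Aux

/-- For `φ ∈ ΓL(V)_H`, the induced permutation `φ'` of the projective
points maps the block `[W]` to `[σφσ(W)]` for every (e+1)-dimensional subspace `W` of `H`;
in particular `φ'` maps blocks in `ℬ'` to blocks in `ℬ'`. -/
theorem stmt8 (q e : ℕ) (hq : ∃ p n : ℕ, p.Prime ∧ 0 < n ∧ q = p ^ n) (he : 1 ≤ e)
    (K V : Type*) [Field K] [Fintype K] (hK : Fintype.card K = q)
    [AddCommGroup V] [Module K V] [FiniteDimensional K V]
    (hV : Module.finrank K V = 2 * e + 1)
    (H : Submodule K V) (hH : Module.finrank K ↥H = 2 * e)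
    (σ : Submodule K V → Submodule K V)
    (hσle : ∀ W ≤ H, σ W ≤ H)
    (hσinv : ∀ W ≤ H, σ (σ W) = W)
    (hσanti : ∀ W₁ W₂ : Submodule K V, W₁ ≤ H → W₂ ≤ H → W₁ ≤ W₂ → σ W₂ ≤ σ W₁)
    (hσinf : ∀ W₁ W₂ : Submodule K V, W₁ ≤ H → W₂ ≤ H → σ W₁ ⊓ σ W₂ = σ (W₁ ⊔ W₂))
    (hσrank : ∀ W ≤ H, Module.finrank K ↥(σ W) = 2 * e - Module.finrank K ↥W)
    (τ : K ≃+* K) (φ : V ≃+ V) (hφ : ∀ (c : K) (x : V), φ (c • x) = τ c • φ x)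
    (hφH : semimap τ φ hφ H = H) :
    (∀ W : Submodule K V, Module.finrank K W = e + 1 → W ≤ H →
      phiMap σ H τ φ hφ '' projPts K (W : Set V) =
        projPts K (σ (semimap τ φ hφ (σ W)) : Set V)) ∧
    (∀ B ∈ {B : Set (Submodule K V) |
        ∃ W : Submodule K V, Module.finrank K W = e + 1 ∧ W ≤ H ∧ B = projPts K (W : Set V)},
      phiMap σ H τ φ hφ '' B ∈ {B : Set (Submodule K V) |
        ∃ W : Submodule K V, Module.finrank K W = e + 1 ∧ W ≤ H ∧ B = projPts K (W : Set V)}) := by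
  have hφH' : semimap τ.symm φ.symm (hphisymm τ φ hφ) H = H := by
    conv_lhs => rw [← hφH]
    exact semimap_symm_semimap τ φ hφ H
  have key : ∀ W : Submodule K V, Module.finrank K W = e + 1 → W ≤ H →
      phiMap σ H τ φ hφ '' projPts K (W : Set V) =
        projPts K (σ (semimap τ φ hφ (σ W)) : Set V) := by
    intro W hrk hWH
    have hσW : σ W ≤ H := hσle W hWH
    have hφσW : semimap τ φ hφ (σ W) ≤ H := by
      rw [← hφH]; exact semimap_mono τ φ hφ hσW
    ext Q
    simp only [projPts, Set.mem_image, Set.mem_setOf_eq]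
    constructor
    · rintro ⟨P, ⟨hP1, hPW⟩, rfl⟩
      have hPW' : P ≤ W := hPW
      have hPH : P ≤ H := le_trans hPW' hWH
      have hσP : σ P ≤ H := hσle P hPH
      have hφσP : semimap τ φ hφ (σ P) ≤ H := by
        rw [← hφH]; exact semimap_mono τ φ hφ hσP
      rw [show phiMap σ H τ φ hφ P = σ (semimap τ φ hφ (σ P)) from if_pos hPH]
      refine ⟨?_, ?_⟩
      · rw [hσrank _ hφσP, finrank_semimap, hσrank _ hPH, hP1]; omega
      · exact hσanti _ _ hφσW hφσP (semimap_mono τ φ hφ (hσanti P W hPH hWH hPW'))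
    · rintro ⟨hQ1, hQle⟩
      have hQle' : Q ≤ σ (semimap τ φ hφ (σ W)) := hQle
      have hQH : Q ≤ H := le_trans hQle' (hσle _ hφσW)
      have hσQ : σ Q ≤ H := hσle Q hQH
      set P := σ (semimap τ.symm φ.symm (hphisymm τ φ hφ) (σ Q)) with hP
      have hψσQ : semimap τ.symm φ.symm (hphisymm τ φ hφ) (σ Q) ≤ H := by
        rw [← hφH']; exact semimap_mono _ _ _ hσQ
      have hPH : P ≤ H := hσle _ hψσQ
      have hP1 : Module.finrank K ↥P = 1 := by
        rw [hP, hσrank _ hψσQ, finrank_semimap, hσrank _ hQH, hQ1]; omega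
      have h2 : semimap τ φ hφ (σ W) ≤ σ Q := by
        have := hσanti Q _ hQH (hσle _ hφσW) hQle'
        rwa [hσinv _ hφσW] at this
      have h3 : σ W ≤ semimap τ.symm φ.symm (hphisymm τ φ hφ) (σ Q) := by
        have := semimap_mono τ.symm φ.symm (hphisymm τ φ hφ) h2
        rwa [semimap_symm_semimap] at this
      have hPW : P ≤ W := by
        have := hσanti _ _ hσW hψσQ h3
        rwa [hσinv _ hWH] at this
      refine ⟨P, ⟨hP1, hPW⟩, ?_⟩
      simp only [phiMap]
      rw [if_pos hPH, hP, hσinv _ hψσQ, semimap_semimap_symm, hσinv _ hQH]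
  refine ⟨key, ?_⟩
  rintro B ⟨W, hrk, hWH, rfl⟩
  have hσW : σ W ≤ H := hσle W hWH
  have hφσW : semimap τ φ hφ (σ W) ≤ H := by
    rw [← hφH]; exact semimap_mono τ φ hφ hσW
  refine ⟨σ (semimap τ φ hφ (σ W)), ?_, hσle _ hφσW, key W hrk hWH⟩
  rw [hσrank _ hφσW, finrank_semimap, hσrank _ hWH, hrk]; omega
end

section
/- For any two distinct blocks B₁, B₂ of the Jungnickel–Tonchev design ([V], 𝒜' ∪ ℬ'), the intersection size |B₁ ∩ B₂| equals (q^i − 1)/(q − 1) for some integer i with 1 ≤ i ≤ e; these are exactly the intersection sizes of pairs of distinct blocks of the geometric design PG_e(2e,q). -/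
/-- The block set of the geometric design `PG_e(2e, q)`: the sets `[W]` for the
(e+1)-dimensional subspaces `W` of `V`. -/
def blocksPG {K V : Type*} [Field K] [AddCommGroup V] [Module K V]
    (e : ℕ) : Set (Set (Submodule K V)) :=
  {B | ∃ W : Submodule K V, Module.finrank K W = e + 1 ∧ B = projPts K (W : Set V)}

set_option linter.unusedSectionVars false
set_option linter.unusedVariables false

namespace JTaux

open Module Submodule Set


/-- geometric sum -/
def gs (q i : ℕ) : ℕ := ∑ k ∈ Finset.range i, q ^ k

lemma gs_succ (q i : ℕ) : gs q (i+1) = gs q i + q ^ i := Finset.sum_range_succ _ _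

lemma gs_mul (q : ℕ) (hq : 1 ≤ q) (i : ℕ) : (q - 1) * gs q i = q ^ i - 1 := by
  induction i with
  | zero => simp [gs]
  | succ n ih =>
    have h1 : 1 ≤ q ^ n := Nat.one_le_pow _ _ hq
    have h2 : q ^ n ≤ q ^ n * q := Nat.le_mul_of_pos_right _ hq
    rw [gs_succ, Nat.mul_add, ih, pow_succ, Nat.sub_mul, one_mul, mul_comm q (q ^ n)]
    omega

lemma gs_eq_div (q : ℕ) (hq : 2 ≤ q) (i : ℕ) : gs q i = (q ^ i - 1) / (q - 1) := by
  rw [← gs_mul q (by omega) i, Nat.mul_div_cancel_left _ (by omega : 0 < q - 1)]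

variable {K V : Type*} [Field K] [AddCommGroup V] [Module K V]

lemma mem_projPts_iff {U : Submodule K V} {P : Submodule K V} :
    P ∈ projPts K (U : Set V) ↔ Module.finrank K P = 1 ∧ P ≤ U := by
  unfold projPts; simp [SetLike.coe_subset_coe]

lemma projPts_inter (U₁ U₂ : Submodule K V) :
    projPts K (U₁ : Set V) ∩ projPts K (U₂ : Set V) = projPts K ((U₁ ⊓ U₂ : Submodule K V) : Set V) := by
  ext P
  simp only [Set.mem_inter_iff, mem_projPts_iff, le_inf_iff]
  tauto

variable [FiniteDimensional K V]

lemma span_eq_of_rank_one {P : Submodule K V} (hP : Module.finrank K P = 1)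
    {x : V} (hx : x ∈ P) (h0 : x ≠ 0) : Submodule.span K {x} = P := by
  apply Submodule.eq_of_le_of_finrank_le ((Submodule.span_singleton_le_iff_mem _ _).2 hx)
  rw [hP, finrank_span_singleton h0]

lemma projPts_mono {U₁ U₂ : Submodule K V} (h : U₁ ≤ U₂) :
    projPts K (U₁ : Set V) ⊆ projPts K (U₂ : Set V) := by
  intro P hP
  rw [mem_projPts_iff] at *
  exact ⟨hP.1, hP.2.trans h⟩

lemma projPts_injective {U₁ U₂ : Submodule K V}
    (h : projPts K (U₁ : Set V) = projPts K (U₂ : Set V)) : U₁ = U₂ := by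
  have key : ∀ {A B : Submodule K V}, projPts K (A : Set V) ⊆ projPts K (B : Set V) → A ≤ B := by
    intro A B hAB x hx
    rcases eq_or_ne x 0 with rfl | hx0
    · exact B.zero_mem
    · have : Submodule.span K {x} ∈ projPts K (A : Set V) := by
        rw [mem_projPts_iff]
        exact ⟨finrank_span_singleton hx0, (Submodule.span_singleton_le_iff_mem _ _).2 hx⟩
      have := hAB this
      rw [mem_projPts_iff] at this
      exact this.2 (Submodule.mem_span_singleton_self x)
  exact le_antisymm (key h.le) (key h.ge)

section count
variable [Fintype K]

lemma ncard_projPts (U : Submodule K V) :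
    (projPts K (U : Set V)).ncard = gs (Fintype.card K) (Module.finrank K U) := by
  classical
  have hfinV : Finite V := Module.finite_of_finite K
  cases nonempty_fintype V
  set q := Fintype.card K with hq
  have hq2 : 2 ≤ q := Fintype.one_lt_card
  -- the finsets
  set t : Finset (Submodule K V) := (projPts K (U : Set V)).toFinset with ht
  set s : Finset V := ((U : Set V) \ {0}).toFinset with hs
  have hmem : ∀ x ∈ s, Submodule.span K {x} ∈ t := by
    intro x hx
    rw [hs, Set.mem_toFinset, Set.mem_diff, Set.mem_singleton_iff] at hx
    rw [ht, Set.mem_toFinset, mem_projPts_iff]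
    exact ⟨finrank_span_singleton hx.2, (Submodule.span_singleton_le_iff_mem _ _).2 hx.1⟩
  have hsum := Finset.card_eq_sum_card_fiberwise hmem
  have hfib : ∀ P ∈ t, (s.filter fun x => Submodule.span K {x} = P).card = q - 1 := by
    intro P hP
    rw [ht, Set.mem_toFinset, mem_projPts_iff] at hP
    have hPe : (s.filter fun x => Submodule.span K {x} = P) = ((P : Set V) \ {0}).toFinset := by
      ext x
      simp only [Finset.mem_filter, hs, Set.mem_toFinset, Set.mem_diff, Set.mem_singleton_iff]
      constructor
      · rintro ⟨⟨hxU, hx0⟩, hsp⟩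
        exact ⟨hsp ▸ Submodule.mem_span_singleton_self x, hx0⟩
      · rintro ⟨hxP, hx0⟩
        exact ⟨⟨hP.2 hxP, hx0⟩, span_eq_of_rank_one hP.1 hxP hx0⟩
    rw [hPe]
    rw [Set.toFinset_diff, Finset.card_sdiff_of_subset (by simp)]
    have : (P : Set V).toFinset.card = q ^ Module.finrank K P := by
      rw [Set.toFinset_card, ← Module.card_eq_pow_finrank (K := K) (V := P)]
      exact Fintype.card_congr (Equiv.refl _)
    rw [this, hP.1, pow_one]
    simp
  rw [Finset.sum_congr rfl hfib, Finset.sum_const, smul_eq_mul] at hsum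
  have hscard : s.card = q ^ Module.finrank K U - 1 := by
    rw [hs, Set.toFinset_diff, Finset.card_sdiff_of_subset (by simp)]
    have : (U : Set V).toFinset.card = q ^ Module.finrank K U := by
      rw [Set.toFinset_card, ← Module.card_eq_pow_finrank (K := K) (V := U)]
      exact Fintype.card_congr (Equiv.refl _)
    rw [this]
    simp
  have hgs := gs_mul q (by omega) (Module.finrank K U)
  have hncard : (projPts K (U : Set V)).ncard = t.card := by
    rw [ht, Set.ncard_eq_toFinset_card']
  rw [hncard]
  have : t.card * (q - 1) = (q - 1) * gs q (Module.finrank K U) := by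
    rw [hgs, ← hscard, hsum]
  have hpos : 0 < q - 1 := by omega
  nlinarith [this]

end count

section geom
variable (H : Submodule K V)

/-- points of `W` outside `H` -/
def outPts (H W : Submodule K V) : Set (Submodule K V) :=
  {P | Module.finrank K P = 1 ∧ P ≤ W ∧ ¬ P ≤ H}

lemma mem_outPts {W P : Submodule K V} :
    P ∈ outPts H W ↔ Module.finrank K P = 1 ∧ P ≤ W ∧ ¬ P ≤ H := Iff.rfl

lemma outPts_eq_diff (W : Submodule K V) :
    outPts H W = projPts K (W : Set V) \ projPts K ((W ⊓ H : Submodule K V) : Set V) := by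
  ext P
  simp only [outPts, Set.mem_setOf_eq, Set.mem_diff, mem_projPts_iff, le_inf_iff]
  tauto

lemma blockA_eq (σ : Submodule K V → Submodule K V) (W : Submodule K V)
    (hσ : σ (W ⊓ H) ≤ H) :
    blockA σ H W = projPts K ((σ (W ⊓ H) : Submodule K V) : Set V) ∪ outPts H W := by
  ext P
  show (Module.finrank K P = 1 ∧ (P : Set V) ⊆ _) ↔ _
  constructor
  · rintro ⟨h1, hsub⟩
    by_cases hPH : P ≤ H
    · left
      rw [mem_projPts_iff]
      refine ⟨h1, fun x hx => ?_⟩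
      rcases hsub hx with h | h
      · exact h
      · exact absurd (hPH hx) h.2
    · right
      obtain ⟨x, hxP, hxH⟩ := SetLike.not_le_iff_exists.1 hPH
      have hx0 : x ≠ 0 := fun h => hxH (h ▸ H.zero_mem)
      have hxW : x ∈ W := by
        rcases hsub hxP with h | h
        · exact absurd (hσ h) hxH
        · exact h.1
      have hsp := span_eq_of_rank_one h1 hxP hx0
      exact ⟨h1, hsp ▸ (Submodule.span_singleton_le_iff_mem _ _).2 hxW, hPH⟩
  · rintro (hP | hP)
    · rw [mem_projPts_iff] at hP
      exact ⟨hP.1, fun x hx => Or.inl (hP.2 hx)⟩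
    · obtain ⟨h1, hW, hH⟩ := hP
      refine ⟨h1, fun y hy => ?_⟩
      rcases eq_or_ne y 0 with rfl | hy0
      · exact Or.inl ((σ (W ⊓ H)).zero_mem)
      · obtain ⟨x, hxP, hxH⟩ := SetLike.not_le_iff_exists.1 hH
        have hx0 : x ≠ 0 := fun h => hxH (h ▸ H.zero_mem)
        have hsp := span_eq_of_rank_one h1 hxP hx0
        obtain ⟨c, rfl⟩ := Submodule.mem_span_singleton.1 (hsp.symm ▸ hy : y ∈ Submodule.span K {x})
        have hc : c ≠ 0 := fun h => hy0 (by simp [h])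
        have : c • x ∉ H := fun hmem => hxH (by simpa [hc] using H.smul_mem c⁻¹ hmem)
        exact Or.inr ⟨hW hy, this⟩

lemma outPts_inter (W₁ W₂ : Submodule K V) :
    outPts H W₁ ∩ outPts H W₂ = outPts H (W₁ ⊓ W₂) := by
  ext P
  simp only [Set.mem_inter_iff, mem_outPts, le_inf_iff]
  tauto

lemma projPts_inter_outPts {U W : Submodule K V} (hU : U ≤ H) :
    projPts K (U : Set V) ∩ outPts H W = ∅ := by
  ext P
  simp only [Set.mem_inter_iff, mem_projPts_iff, mem_outPts, Set.mem_empty_iff_false, iff_false]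
  rintro ⟨⟨_, hPU⟩, _, _, hPH⟩
  exact hPH (hPU.trans hU)

lemma blockA_inter_blockA (σ : Submodule K V → Submodule K V) (W₁ W₂ : Submodule K V)
    (hσ1 : σ (W₁ ⊓ H) ≤ H) (hσ2 : σ (W₂ ⊓ H) ≤ H) :
    blockA σ H W₁ ∩ blockA σ H W₂ =
      projPts K ((σ (W₁ ⊓ H) ⊓ σ (W₂ ⊓ H) : Submodule K V) : Set V) ∪ outPts H (W₁ ⊓ W₂) := by
  rw [blockA_eq H σ W₁ hσ1, blockA_eq H σ W₂ hσ2]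
  ext P
  simp only [Set.mem_inter_iff, Set.mem_union, mem_projPts_iff, mem_outPts, le_inf_iff]
  constructor
  · rintro ⟨h | h, h' | h'⟩
    · exact Or.inl ⟨h.1, h.2, h'.2⟩
    · exact absurd (h.2.trans hσ1) h'.2.2
    · exact absurd (h'.2.trans hσ2) h.2.2
    · exact Or.inr ⟨h.1, ⟨h.2.1, h'.2.1⟩, h.2.2⟩
  · rintro (h | h)
    · exact ⟨Or.inl ⟨h.1, h.2.1⟩, Or.inl ⟨h.1, h.2.2⟩⟩
    · exact ⟨Or.inr ⟨h.1, h.2.1.1, h.2.2⟩, Or.inr ⟨h.1, h.2.1.2, h.2.2⟩⟩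

lemma blockA_inter_projPts (σ : Submodule K V → Submodule K V) (W U : Submodule K V)
    (hσ : σ (W ⊓ H) ≤ H) (hU : U ≤ H) :
    blockA σ H W ∩ projPts K (U : Set V) =
      projPts K ((σ (W ⊓ H) ⊓ U : Submodule K V) : Set V) := by
  rw [blockA_eq H σ W hσ]
  ext P
  simp only [Set.mem_inter_iff, Set.mem_union, mem_projPts_iff, mem_outPts, le_inf_iff]
  constructor
  · rintro ⟨h | h, h'⟩
    · exact ⟨h.1, h.2, h'.2⟩
    · exact absurd (h'.2.trans hU) h.2.2
  · rintro ⟨h1, h2, h3⟩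
    exact ⟨Or.inl ⟨h1, h2⟩, h1, h3⟩

lemma le_of_outPts_subset {W₁ W₂ : Submodule K V} (h1 : ¬ W₁ ≤ H)
    (h : outPts H W₁ ⊆ outPts H W₂) : W₁ ≤ W₂ := by
  obtain ⟨u, huW, huH⟩ := SetLike.not_le_iff_exists.1 h1
  have key : ∀ x ∈ W₁, x ∉ H → x ∈ W₂ := by
    intro x hxW hxH
    have hx0 : x ≠ 0 := fun h => hxH (h ▸ H.zero_mem)
    have : Submodule.span K {x} ∈ outPts H W₁ :=
      ⟨finrank_span_singleton hx0, (Submodule.span_singleton_le_iff_mem _ _).2 hxW,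
        fun hle => hxH (hle (Submodule.mem_span_singleton_self x))⟩
    exact (h this).2.1 (Submodule.mem_span_singleton_self x)
  intro x hxW
  by_cases hxH : x ∈ H
  · have h1 : x + u ∉ H := fun hm => huH (by simpa using H.sub_mem hm hxH)
    have h2 : x + u ∈ W₂ := key _ (W₁.add_mem hxW huW) h1
    have h3 : u ∈ W₂ := key _ huW huH
    simpa using W₂.sub_mem h2 h3
  · exact key _ hxW hxH

lemma blockA_injective (σ : Submodule K V → Submodule K V) {W₁ W₂ : Submodule K V}
    (h1 : ¬ W₁ ≤ H) (h2 : ¬ W₂ ≤ H)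
    (hσ1 : σ (W₁ ⊓ H) ≤ H) (hσ2 : σ (W₂ ⊓ H) ≤ H)
    (h : blockA σ H W₁ = blockA σ H W₂) : W₁ = W₂ := by
  have key : ∀ (W : Submodule K V), σ (W ⊓ H) ≤ H →
      {P ∈ blockA σ H W | ¬ P ≤ H} = outPts H W := by
    intro W hσW
    rw [blockA_eq H σ W hσW]
    ext P
    simp only [Set.mem_setOf_eq, Set.mem_union, mem_projPts_iff, mem_outPts]
    constructor
    · rintro ⟨hm | hm, hPH⟩
      · exact absurd (hm.2.trans hσW) hPH
      · exact hm
    · intro hm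
      exact ⟨Or.inr hm, hm.2.2⟩
  have hout : outPts H W₁ = outPts H W₂ := by
    rw [← key W₁ hσ1, ← key W₂ hσ2, h]
  exact le_antisymm (le_of_outPts_subset H h1 hout.le) (le_of_outPts_subset H h2 hout.ge)

end geom

section sizes
variable [Fintype K] (H : Submodule K V)

lemma finite_submodule : Finite (Submodule K V) := by
  have : Finite V := Module.finite_of_finite K
  exact Finite.of_injective (fun U => (U : Set V)) SetLike.coe_injective

lemma ncard_outPts (W : Submodule K V) :
    (outPts H W).ncard =
      gs (Fintype.card K) (Module.finrank K ↥W) - gs (Fintype.card K) (Module.finrank K ↥(W ⊓ H)) := by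
  have : Finite (Submodule K V) := finite_submodule
  rw [outPts_eq_diff, Set.ncard_diff (projPts_mono inf_le_left) (Set.toFinite _),
    ncard_projPts, ncard_projPts]

lemma ncard_proj_union_out {U W : Submodule K V} (hU : U ≤ H) :
    (projPts K (U : Set V) ∪ outPts H W).ncard
      = (projPts K (U : Set V)).ncard + (outPts H W).ncard := by
  have : Finite (Submodule K V) := finite_submodule
  apply Set.ncard_union_eq _ (Set.toFinite _) (Set.toFinite _)
  rw [Set.disjoint_iff_inter_eq_empty]
  exact projPts_inter_outPts H hU

lemma finrank_inf_H {e : ℕ} (hV : Module.finrank K V = 2*e+1)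
    (hH : Module.finrank K ↥H = 2*e) {W : Submodule K V} (hW : ¬ W ≤ H) :
    Module.finrank K ↥(W ⊓ H) + 1 = Module.finrank K ↥W := by
  have hlt : H < W ⊔ H := lt_of_le_of_ne le_sup_right (fun h => hW (h ▸ le_sup_left))
  have h1 := Submodule.finrank_lt_finrank_of_lt hlt
  have h2 := Submodule.finrank_le (W ⊔ H)
  have h3 := Submodule.finrank_sup_add_finrank_inf_eq W H
  omega

lemma ncard_inter_AA {e : ℕ} (hV : Module.finrank K V = 2*e+1)
    (hH : Module.finrank K ↥H = 2*e) (σ : Submodule K V → Submodule K V)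
    {W₁ W₂ : Submodule K V}
    (hW₁ : Module.finrank K ↥W₁ = e+1) (h1 : ¬ W₁ ≤ H)
    (hW₂ : Module.finrank K ↥W₂ = e+1) (h2 : ¬ W₂ ≤ H)
    (hσ1 : σ (W₁ ⊓ H) ≤ H) (hσ2 : σ (W₂ ⊓ H) ≤ H)
    (hσsup : σ ((W₁ ⊓ H) ⊔ (W₂ ⊓ H)) ≤ H)
    (hσinf : σ (W₁ ⊓ H) ⊓ σ (W₂ ⊓ H) = σ ((W₁ ⊓ H) ⊔ (W₂ ⊓ H)))
    (hσrank : Module.finrank K ↥(σ ((W₁ ⊓ H) ⊔ (W₂ ⊓ H)))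
      = 2*e - Module.finrank K ↥((W₁ ⊓ H) ⊔ (W₂ ⊓ H))) :
    (blockA σ H W₁ ∩ blockA σ H W₂).ncard
      = gs (Fintype.card K) (Module.finrank K ↥(W₁ ⊓ W₂)) := by
  have hinfinf : (W₁ ⊓ H) ⊓ (W₂ ⊓ H) = (W₁ ⊓ W₂) ⊓ H := by
    rw [inf_inf_inf_comm, inf_idem]
  have hU₁ : Module.finrank K ↥(W₁ ⊓ H) + 1 = e + 1 := by
    rw [finrank_inf_H H hV hH h1, hW₁]
  have hU₂ : Module.finrank K ↥(W₂ ⊓ H) + 1 = e + 1 := by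
    rw [finrank_inf_H H hV hH h2, hW₂]
  have hsum := Submodule.finrank_sup_add_finrank_inf_eq (W₁ ⊓ H) (W₂ ⊓ H)
  rw [hinfinf] at hsum
  -- rank of the sigma part equals rank of (W₁ ⊓ W₂) ⊓ H
  have hσr : Module.finrank K ↥(σ ((W₁ ⊓ H) ⊔ (W₂ ⊓ H)))
      = Module.finrank K ↥((W₁ ⊓ W₂) ⊓ H) := by omega
  rw [blockA_inter_blockA H σ W₁ W₂ hσ1 hσ2, hσinf,
    ncard_proj_union_out H hσsup, ncard_projPts, ncard_outPts, hσr]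
  by_cases hX : W₁ ⊓ W₂ ≤ H
  · rw [inf_eq_left.2 hX]
    omega
  · have hd := finrank_inf_H H hV hH hX
    have hgs := gs_succ (Fintype.card K) (Module.finrank K ↥((W₁ ⊓ W₂) ⊓ H))
    rw [hd] at hgs
    omega

lemma ncard_inter_AB (σ : Submodule K V → Submodule K V) (W U : Submodule K V)
    (hσ : σ (W ⊓ H) ≤ H) (hU : U ≤ H) :
    (blockA σ H W ∩ projPts K (U : Set V)).ncard
      = gs (Fintype.card K) (Module.finrank K ↥(σ (W ⊓ H) ⊓ U)) := by
  rw [blockA_inter_projPts H σ W U hσ hU, ncard_projPts]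

lemma ncard_inter_BB (U₁ U₂ : Submodule K V) :
    (projPts K (U₁ : Set V) ∩ projPts K (U₂ : Set V)).ncard
      = gs (Fintype.card K) (Module.finrank K ↥(U₁ ⊓ U₂)) := by
  rw [projPts_inter, ncard_projPts]

end sizes

section construction

lemma exists_finsets {α : Type*} [Fintype α] [DecidableEq α] (a c : ℕ) (hc : c ≤ a)
    (h : 2*a - c ≤ Fintype.card α) :
    ∃ A B : Finset α, A.card = a ∧ B.card = a ∧ (A ∩ B).card = c := by
  obtain ⟨A, -, hA⟩ := Finset.exists_subset_card_eq
    (by rw [Finset.card_univ]; omega : a ≤ (Finset.univ : Finset α).card)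
  obtain ⟨C, hCA, hC⟩ := Finset.exists_subset_card_eq (by omega : c ≤ A.card)
  obtain ⟨D, hD, hDc⟩ := Finset.exists_subset_card_eq
    (by rw [Finset.card_compl, hA]; omega : a - c ≤ Aᶜ.card)
  have hdisj : Disjoint C D := by
    refine Finset.disjoint_left.2 fun x hxC hxD => ?_
    exact (Finset.mem_compl.1 (hD hxD)) (hCA hxC)
  have hdisjAD : Disjoint A D :=
    Finset.disjoint_left.2 fun x hxA hxD => (Finset.mem_compl.1 (hD hxD)) hxA
  refine ⟨A, C ∪ D, hA, ?_, ?_⟩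
  · rw [Finset.card_union_of_disjoint hdisj, hC, hDc]
    omega
  · rw [Finset.inter_union_distrib_left, Finset.inter_eq_right.2 hCA,
      Finset.disjoint_iff_inter_eq_empty.1 hdisjAD, Finset.union_empty, hC]

variable [Fintype K] [FiniteDimensional K V]

lemma exists_pair (e i : ℕ) (hi1 : 1 ≤ i) (hie : i ≤ e)
    (hV : Module.finrank K V = 2*e+1) (H : Submodule K V)
    (hH : Module.finrank K ↥H = 2*e) :
    ∃ W₁ W₂ : Submodule K V,
      Module.finrank K ↥W₁ = e+1 ∧ Module.finrank K ↥W₂ = e+1 ∧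
      ¬ W₁ ≤ H ∧ ¬ W₂ ≤ H ∧ Module.finrank K ↥(W₁ ⊓ W₂) = i ∧ W₁ ≠ W₂ := by
  classical
  -- a vector outside H
  have hHne : H ≠ ⊤ := by
    intro h
    rw [h, finrank_top] at hH
    omega
  obtain ⟨u, huH⟩ : ∃ u, u ∉ H := by
    by_contra hcon
    push_neg at hcon
    exact hHne (Submodule.eq_top_iff'.2 hcon)
  -- a basis of H, as a family in V
  let b : Basis (Fin (2*e)) K ↥H := (Module.finBasis K ↥H).reindex (finCongr hH)
  let v : Fin (2*e) → V := H.subtype ∘ b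
  have hli : LinearIndependent K v := b.linearIndependent.map' H.subtype (Submodule.ker_subtype H)
  have hvH : ∀ k, v k ∈ H := fun k => (b k).2
  -- spans of subsets
  have hspan_le : ∀ A : Finset (Fin (2*e)), Submodule.span K (v '' ↑A) ≤ H := by
    intro A
    rw [Submodule.span_le]
    rintro x ⟨k, -, rfl⟩
    exact hvH k
  have hspan_rank : ∀ A : Finset (Fin (2*e)),
      Module.finrank K ↥(Submodule.span K (v '' ↑A)) = A.card := by
    intro A
    have hli' : LinearIndependent K fun x : (v '' ↑A) => (x : V) :=
      LinearIndepOn.id_image (s := (A : Set (Fin (2*e)))) (hli.comp _ Subtype.val_injective)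
    haveI : Fintype ↥(v '' (A : Set (Fin (2*e)))) := (Set.toFinite _).fintype
    rw [finrank_span_set_eq_card hli', Set.toFinset_card, ← Nat.card_eq_fintype_card,
      Nat.card_coe_set_eq, Set.ncard_image_of_injective _ hli.injective,
      Set.ncard_coe_finset]
  have hspan_inf : ∀ A B : Finset (Fin (2*e)),
      Submodule.span K (v '' ↑A) ⊓ Submodule.span K (v '' ↑B)
        = Submodule.span K (v '' ↑(A ∩ B)) := by
    intro A B
    have himg : ∀ s : Set (Fin (2*e)), Submodule.span K (v '' s)
        = (Submodule.span K (⇑b '' s)).map H.subtype := by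
      intro s
      rw [show v '' s = H.subtype '' (⇑b '' s) by rw [← Set.image_comp],
        Submodule.span_image]
    rw [himg, himg, himg, ← Submodule.map_inf _ (Submodule.injective_subtype H)]
    congr 1
    ext x
    simp only [Submodule.mem_inf, Basis.mem_span_image, Finset.coe_inter,
      Set.subset_inter_iff]
  -- the span of u
  have hinfu : ∀ Y : Submodule K V, Y ≤ H → Submodule.span K {u} ⊓ Y = ⊥ := by
    intro Y hY
    rw [eq_bot_iff]
    rintro x ⟨hx1, hx2⟩
    obtain ⟨c, rfl⟩ := Submodule.mem_span_singleton.1 hx1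
    rcases eq_or_ne c 0 with rfl | hc
    · simp
    · exact absurd (by simpa [hc] using H.smul_mem c⁻¹ (hY hx2)) huH
  have hranksup : ∀ Y : Submodule K V, Y ≤ H →
      Module.finrank K ↥(Submodule.span K {u} ⊔ Y) = Module.finrank K ↥Y + 1 := by
    intro Y hY
    have := Submodule.finrank_sup_add_finrank_inf_eq (Submodule.span K {u}) Y
    rw [hinfu Y hY, finrank_bot, finrank_span_singleton
      (fun h => huH (by rw [h]; exact H.zero_mem))] at this
    omega
  have hsupinf : ∀ Y Z : Submodule K V, Y ≤ H → Z ≤ H →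
      (Submodule.span K {u} ⊔ Y) ⊓ (Submodule.span K {u} ⊔ Z)
        = Submodule.span K {u} ⊔ (Y ⊓ Z) := by
    intro Y Z hY hZ
    apply le_antisymm
    · rintro x ⟨hx1, hx2⟩
      obtain ⟨a, ha, y, hy, rfl⟩ := Submodule.mem_sup.1 hx1
      obtain ⟨a', ha', z, hz, heq⟩ := Submodule.mem_sup.1 hx2
      obtain ⟨c, rfl⟩ := Submodule.mem_span_singleton.1 ha
      obtain ⟨c', rfl⟩ := Submodule.mem_span_singleton.1 ha'
      have hyz : (c' - c) • u = y - z := by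
        rw [sub_smul, sub_eq_sub_iff_add_eq_add, heq, add_comm]
      have hcc : c' = c := by
        by_contra hne
        apply huH
        have hu : u = (c' - c)⁻¹ • (y - z) := by
          rw [← hyz, smul_smul, inv_mul_cancel₀ (sub_ne_zero.2 hne), one_smul]
        rw [hu]
        exact H.smul_mem _ (H.sub_mem (hY hy) (hZ hz))
      have hy_eq : y = z := by
        rw [hcc, sub_self, zero_smul] at hyz
        exact (sub_eq_zero.1 hyz.symm)
      exact Submodule.mem_sup.2 ⟨c • u, Submodule.smul_mem _ c (Submodule.mem_span_singleton_self u),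
        y, ⟨hy, hy_eq ▸ hz⟩, rfl⟩
    · exact le_inf (sup_le_sup_left inf_le_left _) (sup_le_sup_left inf_le_right _)
  -- choose index sets
  obtain ⟨A, B, hA, hB, hAB⟩ := exists_finsets (α := Fin (2*e)) e (i-1) (by omega)
    (by rw [Fintype.card_fin]; omega)
  refine ⟨Submodule.span K {u} ⊔ Submodule.span K (v '' ↑A),
    Submodule.span K {u} ⊔ Submodule.span K (v '' ↑B), ?_, ?_, ?_, ?_, ?_, ?_⟩
  · rw [hranksup _ (hspan_le A), hspan_rank, hA]
  · rw [hranksup _ (hspan_le B), hspan_rank, hB]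
  · intro hle
    exact huH (hle (le_sup_left (a := Submodule.span K {u}) (Submodule.mem_span_singleton_self u)))
  · intro hle
    exact huH (hle (le_sup_left (a := Submodule.span K {u}) (Submodule.mem_span_singleton_self u)))
  · rw [hsupinf _ _ (hspan_le A) (hspan_le B), hspan_inf,
      hranksup _ (hspan_le (A ∩ B)), hspan_rank, hAB]
    omega
  · intro heq
    have h1 : Module.finrank K ↥((Submodule.span K {u} ⊔ Submodule.span K (v '' ↑A)) ⊓
        (Submodule.span K {u} ⊔ Submodule.span K (v '' ↑B))) = i := by
      rw [hsupinf _ _ (hspan_le A) (hspan_le B), hspan_inf,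
        hranksup _ (hspan_le (A ∩ B)), hspan_rank, hAB]
      omega
    rw [heq, inf_idem, hranksup _ (hspan_le B), hspan_rank, hB] at h1
    omega

end construction

end JTaux

open JTaux in
/-- Any two distinct blocks of the Jungnickel–Tonchev design meet in
`(q^i - 1)/(q - 1)` points for some `1 ≤ i ≤ e`, and the set of intersection sizes of pairs
of distinct blocks is exactly the same as for the geometric design `PG_e(2e, q)`. -/
theorem stmt12 (q e : ℕ) (hq : ∃ p n : ℕ, p.Prime ∧ 0 < n ∧ q = p ^ n) (he : 2 ≤ e)
    (K V : Type*) [Field K] [Fintype K] (hK : Fintype.card K = q)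
    [AddCommGroup V] [Module K V] [FiniteDimensional K V]
    (hV : Module.finrank K V = 2 * e + 1)
    (H : Submodule K V) (hH : Module.finrank K ↥H = 2 * e)
    (σ : Submodule K V → Submodule K V)
    (hσle : ∀ W ≤ H, σ W ≤ H)
    (hσinv : ∀ W ≤ H, σ (σ W) = W)
    (hσanti : ∀ W₁ W₂ : Submodule K V, W₁ ≤ H → W₂ ≤ H → W₁ ≤ W₂ → σ W₂ ≤ σ W₁)
    (hσinf : ∀ W₁ W₂ : Submodule K V, W₁ ≤ H → W₂ ≤ H → σ W₁ ⊓ σ W₂ = σ (W₁ ⊔ W₂))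
    (hσrank : ∀ W ≤ H, Module.finrank K ↥(σ W) = 2 * e - Module.finrank K ↥W)
    :
    (∀ B₁ ∈ blocksJT e σ H, ∀ B₂ ∈ blocksJT e σ H, B₁ ≠ B₂ →
      ∃ i : ℕ, 1 ≤ i ∧ i ≤ e ∧ (B₁ ∩ B₂).ncard = (q ^ i - 1) / (q - 1)) ∧
    {n : ℕ | ∃ B₁ ∈ blocksJT e σ H, ∃ B₂ ∈ blocksJT e σ H, B₁ ≠ B₂ ∧ (B₁ ∩ B₂).ncard = n} =
      {n : ℕ | ∃ B₁ ∈ blocksPG (K := K) (V := V) e, ∃ B₂ ∈ blocksPG (K := K) (V := V) e,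
        B₁ ≠ B₂ ∧ (B₁ ∩ B₂).ncard = n} := by
  subst hK
  have hq2 : 2 ≤ Fintype.card K := Fintype.one_lt_card
  -- generic rank bounds
  have rank_inf_le : ∀ {X Y : Submodule K V}, Module.finrank K ↥X = e+1 →
      Module.finrank K ↥Y = e+1 → X ≠ Y → Module.finrank K ↥(X ⊓ Y) ≤ e := by
    intro X Y hX hY hne
    have h1 : Module.finrank K ↥(X ⊓ Y) ≤ e+1 := by
      rw [← hX]; exact Submodule.finrank_mono inf_le_left
    rcases Nat.lt_or_ge (Module.finrank K ↥(X ⊓ Y)) (e+1) with h | h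
    · omega
    · exfalso
      apply hne
      have e1 : X ⊓ Y = X := Submodule.eq_of_le_of_finrank_le inf_le_left (by omega)
      have e2 : X ⊓ Y = Y := Submodule.eq_of_le_of_finrank_le inf_le_right (by omega)
      exact e1.symm.trans e2
  have rank_inf_ge1 : ∀ {X Y : Submodule K V}, Module.finrank K ↥X = e+1 →
      Module.finrank K ↥Y = e+1 → 1 ≤ Module.finrank K ↥(X ⊓ Y) := by
    intro X Y hX hY
    have hsum := Submodule.finrank_sup_add_finrank_inf_eq X Y
    have hle := Submodule.finrank_le (X ⊔ Y)
    rw [hV] at hle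
    omega
  -- the mixed case
  have caseAB : ∀ W U : Submodule K V, Module.finrank K ↥W = e+1 → ¬ W ≤ H →
      Module.finrank K ↥U = e+1 → U ≤ H →
      ∃ i : ℕ, 1 ≤ i ∧ i ≤ e ∧
        (blockA σ H W ∩ projPts K (U : Set V)).ncard = gs (Fintype.card K) i := by
    intro W U hr hnle hrU hU
    have hWHr := finrank_inf_H H hV hH hnle
    rw [hr] at hWHr
    have hσr := hσrank (W ⊓ H) inf_le_right
    have hsup_le : Module.finrank K ↥(σ (W ⊓ H) ⊔ U) ≤ 2*e := by
      have := Submodule.finrank_mono (sup_le (hσle (W ⊓ H) inf_le_right) hU)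
      rw [hH] at this
      exact this
    have hsum := Submodule.finrank_sup_add_finrank_inf_eq (σ (W ⊓ H)) U
    have hmono := Submodule.finrank_mono (inf_le_left : σ (W ⊓ H) ⊓ U ≤ σ (W ⊓ H))
    exact ⟨Module.finrank K ↥(σ (W ⊓ H) ⊓ U), by omega, by omega,
      ncard_inter_AB H σ W U (hσle _ inf_le_right) hU⟩
  -- the AA case
  have caseAA : ∀ W₁ W₂ : Submodule K V, W₁ ∈ setA e H → W₂ ∈ setA e H →
      (blockA σ H W₁ ∩ blockA σ H W₂).ncard
        = gs (Fintype.card K) (Module.finrank K ↥(W₁ ⊓ W₂)) := by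
    intro W₁ W₂ h1 h2
    exact ncard_inter_AA H hV hH σ h1.1 h1.2 h2.1 h2.2
      (hσle _ inf_le_right) (hσle _ inf_le_right)
      (hσle _ (sup_le inf_le_right inf_le_right))
      (hσinf _ _ inf_le_right inf_le_right)
      (hσrank _ (sup_le inf_le_right inf_le_right))
  -- part 1 with gs
  have key : ∀ B₁ ∈ blocksJT e σ H, ∀ B₂ ∈ blocksJT e σ H, B₁ ≠ B₂ →
      ∃ i : ℕ, 1 ≤ i ∧ i ≤ e ∧ (B₁ ∩ B₂).ncard = gs (Fintype.card K) i := by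
    rintro B₁ hB₁ B₂ hB₂ hne
    rcases hB₁ with ⟨W₁, hW₁, rfl⟩ | ⟨W₁, hr₁, hle₁, rfl⟩
    · rcases hB₂ with ⟨W₂, hW₂, rfl⟩ | ⟨W₂, hr₂, hle₂, rfl⟩
      · have hWne : W₁ ≠ W₂ := fun h => hne (by rw [h])
        refine ⟨Module.finrank K ↥(W₁ ⊓ W₂), rank_inf_ge1 hW₁.1 hW₂.1,
          rank_inf_le hW₁.1 hW₂.1 hWne, caseAA W₁ W₂ hW₁ hW₂⟩
      · exact caseAB W₁ W₂ hW₁.1 hW₁.2 hr₂ hle₂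
    · rcases hB₂ with ⟨W₂, hW₂, rfl⟩ | ⟨W₂, hr₂, hle₂, rfl⟩
      · obtain ⟨i, h1, h2, h3⟩ := caseAB W₂ W₁ hW₂.1 hW₂.2 hr₁ hle₁
        exact ⟨i, h1, h2, by rw [Set.inter_comm]; exact h3⟩
      · have hWne : W₁ ≠ W₂ := fun h => hne (by rw [h])
        refine ⟨Module.finrank K ↥(W₁ ⊓ W₂), rank_inf_ge1 hr₁ hr₂,
          rank_inf_le hr₁ hr₂ hWne, ncard_inter_BB W₁ W₂⟩
  -- part 1 for PG
  have keyPG : ∀ B₁ ∈ blocksPG (K := K) (V := V) e, ∀ B₂ ∈ blocksPG (K := K) (V := V) e,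
      B₁ ≠ B₂ → ∃ i : ℕ, 1 ≤ i ∧ i ≤ e ∧ (B₁ ∩ B₂).ncard = gs (Fintype.card K) i := by
    rintro B₁ ⟨W₁, hr₁, rfl⟩ B₂ ⟨W₂, hr₂, rfl⟩ hne
    have hWne : W₁ ≠ W₂ := fun h => hne (by rw [h])
    exact ⟨Module.finrank K ↥(W₁ ⊓ W₂), rank_inf_ge1 hr₁ hr₂,
      rank_inf_le hr₁ hr₂ hWne, ncard_inter_BB W₁ W₂⟩
  -- achievability of every value 1 ≤ i ≤ e, for both designs
  have ach : ∀ i : ℕ, 1 ≤ i → i ≤ e →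
      (∃ B₁ ∈ blocksJT e σ H, ∃ B₂ ∈ blocksJT e σ H, B₁ ≠ B₂ ∧
        (B₁ ∩ B₂).ncard = gs (Fintype.card K) i) ∧
      (∃ B₁ ∈ blocksPG (K := K) (V := V) e, ∃ B₂ ∈ blocksPG (K := K) (V := V) e, B₁ ≠ B₂ ∧
        (B₁ ∩ B₂).ncard = gs (Fintype.card K) i) := by
    intro i hi1 hie
    obtain ⟨W₁, W₂, hr₁, hr₂, hnle₁, hnle₂, hinf, hWne⟩ :=
      exists_pair (K := K) (V := V) e i hi1 hie hV H hH
    have hW₁A : W₁ ∈ setA e H := ⟨hr₁, hnle₁⟩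
    have hW₂A : W₂ ∈ setA e H := ⟨hr₂, hnle₂⟩
    constructor
    · refine ⟨blockA σ H W₁, Or.inl ⟨W₁, hW₁A, rfl⟩, blockA σ H W₂, Or.inl ⟨W₂, hW₂A, rfl⟩,
        ?_, ?_⟩
      · intro h
        exact hWne (blockA_injective H σ hnle₁ hnle₂
          (hσle _ inf_le_right) (hσle _ inf_le_right) h)
      · rw [caseAA W₁ W₂ hW₁A hW₂A, hinf]
    · refine ⟨projPts K (W₁ : Set V), ⟨W₁, hr₁, rfl⟩, projPts K (W₂ : Set V), ⟨W₂, hr₂, rfl⟩,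
        ?_, ?_⟩
      · intro h
        exact hWne (projPts_injective h)
      · rw [ncard_inter_BB W₁ W₂, hinf]
  constructor
  · intro B₁ h₁ B₂ h₂ hne
    obtain ⟨i, hi1, hie, hc⟩ := key B₁ h₁ B₂ h₂ hne
    exact ⟨i, hi1, hie, by rw [hc, gs_eq_div _ hq2]⟩
  · ext m
    simp only [Set.mem_setOf_eq]
    constructor
    · rintro ⟨B₁, h₁, B₂, h₂, hne, rfl⟩
      obtain ⟨i, hi1, hie, hc⟩ := key B₁ h₁ B₂ h₂ hne
      obtain ⟨B₁', h₁', B₂', h₂', hne', hc'⟩ := (ach i hi1 hie).2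
      exact ⟨B₁', h₁', B₂', h₂', hne', by rw [hc', hc]⟩
    · rintro ⟨B₁, h₁, B₂, h₂, hne, rfl⟩
      obtain ⟨i, hi1, hie, hc⟩ := keyPG B₁ h₁ B₂ h₂ hne
      obtain ⟨B₁', h₁', B₂', h₂', hne', hc'⟩ := (ach i hi1 hie).1
      exact ⟨B₁', h₁', B₂', h₂', hne', by rw [hc', hc]⟩
end
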